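/- Let L be a lattice. If L has an interval [a, b] with a < b that is a distributive lattice, then L has a proper congruence-preserving extension; that is, there exist a lattice K and a non-surjective lattice embedding f : L → K such that for every congruence Θ of L there is exactly one congruence Φ of K with Φ(f x, f y) ↔ Θ(x, y) for all x, y ∈ L. -/

import Mathlib

universe u

/-- A *congruence* of a lattice: an equivalence relation compatible with
joins and meets. -/
def IsLatticeCongruence {α : Type*} [Lattice α] (Θ : α → α → Prop) : Prop :=
  Equivalence Θ ∧
    ∀ a b c d : α, Θ a b → Θ c d → Θ (a ⊔ c) (b ⊔ d) ∧ Θ (a ⊓ c) (b ⊓ d)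

namespace CPE

variable {L : Type u} [Lattice L]

/-- Balanced triple. -/
def Bal (p : L × L × L) : Prop :=
  p.1 ⊓ p.2.1 = p.2.1 ⊓ p.2.2 ∧ p.1 ⊓ p.2.2 = p.2.1 ⊓ p.2.2

/-- Membership predicate for the extension lattice. -/
def P (a b : L) (p : L × L × L) : Prop :=
  (a ≤ p.2.1 ∧ p.2.1 ≤ b) ∧ (a ≤ p.2.2 ∧ p.2.2 ≤ b) ∧
    ((p.2.1 = a ∧ p.2.2 = a) ∨ (a ≤ p.1 ∧ Bal p))

/-- The underlying type of the extension. -/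
abbrev K (a b : L) : Type u := {p : L × L × L // P a b p}

instance (a b : L) : PartialOrder (K a b) :=
  inferInstanceAs (PartialOrder {p : L × L × L // P a b p})

lemma K_le_iff {a b : L} (u v : K a b) :
    u ≤ v ↔ u.1.1 ≤ v.1.1 ∧ u.1.2.1 ≤ v.1.2.1 ∧ u.1.2.2 ≤ v.1.2.2 := by
  rw [← Subtype.coe_le_coe, Prod.le_def, Prod.le_def]

/-- Distributivity of the interval `[a,b]`. -/
def Hd (a b : L) : Prop := ∀ x, a ≤ x → x ≤ b → ∀ y, a ≤ y → y ≤ b →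
  ∀ z, a ≤ z → z ≤ b → x ⊓ (y ⊔ z) = (x ⊓ y) ⊔ (x ⊓ z)

/-- The closure map computing joins. -/
def Jf (p : L × L × L) : L × L × L :=
  (p.1 ⊔ p.2.1 ⊓ p.2.2,
   p.2.1 ⊔ (p.1 ⊔ p.2.1 ⊓ p.2.2) ⊓ p.2.2,
   p.2.2 ⊔ (p.1 ⊔ p.2.1 ⊓ p.2.2) ⊓ p.2.1)

section core
variable {a b : L}

lemma bal_J (hd : Hd a b) {x y z : L} (hy1 : a ≤ y) (hy2 : y ≤ b)
    (hz1 : a ≤ z) (hz2 : z ≤ b) : Bal (Jf (x, y, z)) := by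
  have hab : a ≤ b := hy1.trans hy2
  set x1 := x ⊔ y ⊓ z with hx1
  have hax1 : a ≤ x1 := (le_inf hy1 hz1).trans le_sup_right
  set c := x1 ⊓ y with hc
  set d := x1 ⊓ z with hdd
  have hca : a ≤ c := le_inf hax1 hy1
  have hcb : c ≤ b := inf_le_right.trans hy2
  have hda : a ≤ d := le_inf hax1 hz1
  have hdb : d ≤ b := inf_le_right.trans hz2
  have hcy : c ≤ y := inf_le_right
  have hdz : d ≤ z := inf_le_right
  have hcx : c ≤ x1 := inf_le_left
  have hdx : d ≤ x1 := inf_le_left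
  have htx : a ≤ x1 ⊓ b := le_inf hax1 hab
  -- A : x1 ⊓ (y ⊔ d) = c ⊔ d
  have A : x1 ⊓ (y ⊔ d) = c ⊔ d := by
    have h1 : y ⊔ d ≤ b := sup_le hy2 hdb
    have h2 : x1 ⊓ (y ⊔ d) = (x1 ⊓ b) ⊓ (y ⊔ d) := by
      rw [inf_assoc, inf_eq_right.2 h1]
    rw [h2, hd (x1 ⊓ b) htx inf_le_right y hy1 hy2 d hda hdb]
    congr 1
    · rw [inf_assoc, inf_eq_right.2 hy2]
    · exact inf_eq_right.2 (le_inf hdx hdb)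
  -- B : x1 ⊓ (z ⊔ c) = c ⊔ d
  have B : x1 ⊓ (z ⊔ c) = c ⊔ d := by
    have h1 : z ⊔ c ≤ b := sup_le hz2 hcb
    have h2 : x1 ⊓ (z ⊔ c) = (x1 ⊓ b) ⊓ (z ⊔ c) := by
      rw [inf_assoc, inf_eq_right.2 h1]
    rw [h2, hd (x1 ⊓ b) htx inf_le_right z hz1 hz2 c hca hcb]
    rw [inf_assoc, inf_eq_right.2 hz2, inf_eq_right.2 (le_inf hcx hcb)]
    exact sup_comm _ _
  -- C : (y ⊔ d) ⊓ (z ⊔ c) = c ⊔ d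
  have C : (y ⊔ d) ⊓ (z ⊔ c) = c ⊔ d := by
    have h1 : a ≤ y ⊔ d := hy1.trans le_sup_left
    have h2 : y ⊔ d ≤ b := sup_le hy2 hdb
    rw [hd (y ⊔ d) h1 h2 z hz1 hz2 c hca hcb]
    have h3 : (y ⊔ d) ⊓ z = y ⊓ z ⊔ d := by
      rw [inf_comm, hd z hz1 hz2 y hy1 hy2 d hda hdb, inf_comm z y,
        inf_eq_right.2 hdz]
    have h4 : (y ⊔ d) ⊓ c = c := inf_eq_right.2 (hcy.trans le_sup_left)
    rw [h3, h4]
    have h5 : y ⊓ z ≤ c := le_inf le_sup_right inf_le_left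
    rw [sup_right_comm, sup_eq_right.2 h5, sup_comm]
  constructor
  · show x1 ⊓ (y ⊔ x1 ⊓ z) = (y ⊔ x1 ⊓ z) ⊓ (z ⊔ x1 ⊓ y)
    rw [A, C]
  · show x1 ⊓ (z ⊔ x1 ⊓ y) = (y ⊔ x1 ⊓ z) ⊓ (z ⊔ x1 ⊓ y)
    rw [B, C]

lemma mem_J (hab : a ≤ b) (hd : Hd a b) {x y z : L} (hy1 : a ≤ y) (hy2 : y ≤ b)
    (hz1 : a ≤ z) (hz2 : z ≤ b) : P a b (Jf (x, y, z)) := by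
  have hax1 : a ≤ x ⊔ y ⊓ z := (le_inf hy1 hz1).trans le_sup_right
  refine ⟨⟨hy1.trans le_sup_left, sup_le hy2 (inf_le_right.trans hz2)⟩,
    ⟨hz1.trans le_sup_left, sup_le hz2 (inf_le_right.trans hy2)⟩,
    Or.inr ⟨hax1, bal_J hd hy1 hy2 hz1 hz2⟩⟩

lemma le_J (p : L × L × L) : p ≤ Jf p := by
  rw [Prod.le_def, Prod.le_def]
  exact ⟨le_sup_left, le_sup_left, le_sup_left⟩

lemma J_le {p q : L × L × L} (hq : Bal q) (h : p ≤ q) : Jf p ≤ q := by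
  obtain ⟨x, y, z⟩ := p
  obtain ⟨X, Y, Z⟩ := q
  rw [Prod.le_def, Prod.le_def] at h
  obtain ⟨h1, h2, h3⟩ := h
  obtain ⟨hb1, hb2⟩ := hq
  simp only at h1 h2 h3 hb1 hb2
  have hyzX : Y ⊓ Z ≤ X := hb1 ▸ inf_le_left
  have hxzY : X ⊓ Z ≤ Y := hb2 ▸ (hb1 ▸ inf_le_right : Y ⊓ Z ≤ Y)
  have hxyZ : X ⊓ Y ≤ Z := hb1 ▸ inf_le_right
  have k1 : x ⊔ y ⊓ z ≤ X := sup_le h1 ((inf_le_inf h2 h3).trans hyzX)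
  rw [Prod.le_def, Prod.le_def]
  refine ⟨k1, sup_le h2 ((inf_le_inf k1 h3).trans hxzY),
    sup_le h3 ((inf_le_inf k1 h2).trans hxyZ)⟩

lemma P_inf {p q : L × L × L} (hp : P a b p) (hq : P a b q) : P a b (p ⊓ q) := by
  obtain ⟨⟨hpy1, hpy2⟩, ⟨hpz1, hpz2⟩, hps⟩ := hp
  obtain ⟨⟨hqy1, hqy2⟩, ⟨hqz1, hqz2⟩, hqs⟩ := hq
  refine ⟨⟨le_inf hpy1 hqy1, inf_le_left.trans hpy2⟩,
    ⟨le_inf hpz1 hqz1, inf_le_left.trans hpz2⟩, ?_⟩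
  rcases hps with hpure | ⟨hpx, hpb1, hpb2⟩
  · exact Or.inl ⟨by show p.2.1 ⊓ q.2.1 = a; rw [hpure.1]; exact inf_eq_left.2 hqy1,
      by show p.2.2 ⊓ q.2.2 = a; rw [hpure.2]; exact inf_eq_left.2 hqz1⟩
  rcases hqs with hqure | ⟨hqx, hqb1, hqb2⟩
  · exact Or.inl ⟨by show p.2.1 ⊓ q.2.1 = a; rw [hqure.1]; exact inf_eq_right.2 hpy1,
      by show p.2.2 ⊓ q.2.2 = a; rw [hqure.2]; exact inf_eq_right.2 hpz1⟩
  refine Or.inr ⟨le_inf hpx hqx, ?_, ?_⟩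
  · show (p.1 ⊓ q.1) ⊓ (p.2.1 ⊓ q.2.1) = (p.2.1 ⊓ q.2.1) ⊓ (p.2.2 ⊓ q.2.2)
    rw [inf_inf_inf_comm, hpb1, hqb1, inf_inf_inf_comm]
  · show (p.1 ⊓ q.1) ⊓ (p.2.2 ⊓ q.2.2) = (p.2.1 ⊓ q.2.1) ⊓ (p.2.2 ⊓ q.2.2)
    rw [inf_inf_inf_comm, hpb2, hqb2, inf_inf_inf_comm]

/-- Meet in `K`. -/
def kinf (u v : K a b) : K a b := ⟨u.1 ⊓ v.1, P_inf u.2 v.2⟩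

/-- Join in `K`. -/
noncomputable def ksup (hab : a ≤ b) (hd : Hd a b) (u v : K a b) : K a b :=
  @dite _ ((u.1 ⊔ v.1).2.1 = a ∧ (u.1 ⊔ v.1).2.2 = a) (Classical.propDecidable _)
    (fun h => ⟨u.1 ⊔ v.1,
      ⟨⟨u.2.1.1.trans le_sup_left, sup_le u.2.1.2 v.2.1.2⟩,
       ⟨u.2.2.1.1.trans le_sup_left, sup_le u.2.2.1.2 v.2.2.1.2⟩, Or.inl h⟩⟩)
    (fun _ => ⟨Jf (u.1 ⊔ v.1),
      mem_J hab hd (u.2.1.1.trans le_sup_left) (sup_le u.2.1.2 v.2.1.2)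
        (u.2.2.1.1.trans le_sup_left) (sup_le u.2.2.1.2 v.2.2.1.2)⟩)

lemma ksup_val_pure (hab : a ≤ b) (hd : Hd a b) {u v : K a b}
    (h : (u.1 ⊔ v.1).2.1 = a ∧ (u.1 ⊔ v.1).2.2 = a) :
    (ksup hab hd u v).1 = u.1 ⊔ v.1 := by
  rw [ksup, @dif_pos _ (Classical.propDecidable _) h]

lemma ksup_val_npure (hab : a ≤ b) (hd : Hd a b) {u v : K a b}
    (h : ¬((u.1 ⊔ v.1).2.1 = a ∧ (u.1 ⊔ v.1).2.2 = a)) :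
    (ksup hab hd u v).1 = Jf (u.1 ⊔ v.1) := by
  rw [ksup, @dif_neg _ (Classical.propDecidable _) h]

lemma ksup_val_eq_pure (hab : a ≤ b) (hd : Hd a b) {u v : K a b} {t : L × L × L}
    (hcw : u.1 ⊔ v.1 = t) (hp : t.2.1 = a ∧ t.2.2 = a) :
    (ksup hab hd u v).1 = t := by
  rw [ksup_val_pure hab hd (by rw [hcw]; exact hp), hcw]

lemma ksup_val_eq_npure (hab : a ≤ b) (hd : Hd a b) {u v : K a b} {t : L × L × L}
    (hcw : u.1 ⊔ v.1 = t) (hnp : ¬(t.2.1 = a ∧ t.2.2 = a)) :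
    (ksup hab hd u v).1 = Jf t := by
  rw [ksup_val_npure hab hd (by rw [hcw]; exact hnp), hcw]

lemma le_ksup_left (hab : a ≤ b) (hd : Hd a b) (u v : K a b) :
    u ≤ ksup hab hd u v := by
  rw [← Subtype.coe_le_coe]
  by_cases h : (u.1 ⊔ v.1).2.1 = a ∧ (u.1 ⊔ v.1).2.2 = a
  · rw [ksup_val_pure hab hd h]; exact le_sup_left
  · rw [ksup_val_npure hab hd h]; exact le_sup_left.trans (le_J _)

lemma le_ksup_right (hab : a ≤ b) (hd : Hd a b) (u v : K a b) :
    v ≤ ksup hab hd u v := by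
  rw [← Subtype.coe_le_coe]
  by_cases h : (u.1 ⊔ v.1).2.1 = a ∧ (u.1 ⊔ v.1).2.2 = a
  · rw [ksup_val_pure hab hd h]; exact le_sup_right
  · rw [ksup_val_npure hab hd h]; exact le_sup_right.trans (le_J _)

lemma ksup_le (hab : a ≤ b) (hd : Hd a b) {u v w : K a b}
    (h1 : u ≤ w) (h2 : v ≤ w) : ksup hab hd u v ≤ w := by
  rw [← Subtype.coe_le_coe] at h1 h2 ⊢
  by_cases h : (u.1 ⊔ v.1).2.1 = a ∧ (u.1 ⊔ v.1).2.2 = a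
  · rw [ksup_val_pure hab hd h]; exact sup_le h1 h2
  · rw [ksup_val_npure hab hd h]
    have hw : Bal w.1 := by
      rcases w.2.2.2 with hpure | hnew
      · exfalso
        apply h
        constructor
        · have hh : (u.1 ⊔ v.1).2.1 ≤ w.1.2.1 := sup_le (Prod.le_def.1 ((Prod.le_def.1 h1).2)).1
            (Prod.le_def.1 ((Prod.le_def.1 h2).2)).1
          rw [hpure.1] at hh
          exact le_antisymm hh (u.2.1.1.trans le_sup_left)
        · have hh : (u.1 ⊔ v.1).2.2 ≤ w.1.2.2 := sup_le (Prod.le_def.1 ((Prod.le_def.1 h1).2)).2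
            (Prod.le_def.1 ((Prod.le_def.1 h2).2)).2
          rw [hpure.2] at hh
          exact le_antisymm hh (u.2.2.1.1.trans le_sup_left)
      · exact hnew.2
    exact J_le hw (sup_le h1 h2)

/-- The lattice structure on `K`. -/
noncomputable def latK (hab : a ≤ b) (hd : Hd a b) : Lattice (K a b) :=
  { (inferInstance : PartialOrder (K a b)) with
    sup := ksup hab hd
    le_sup_left := le_ksup_left hab hd
    le_sup_right := le_ksup_right hab hd
    sup_le := fun _ _ _ h1 h2 => ksup_le hab hd h1 h2
    inf := kinf
    inf_le_left := fun u v => by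
      rw [← Subtype.coe_le_coe]; exact inf_le_left
    inf_le_right := fun u v => by
      rw [← Subtype.coe_le_coe]; exact inf_le_right
    le_inf := fun u v w h1 h2 => by
      rw [← Subtype.coe_le_coe] at h1 h2 ⊢; exact le_inf h1 h2 }

/-- The embedding. -/
def femb (hab : a ≤ b) (l : L) : K a b :=
  ⟨(l, a, a), ⟨⟨le_refl a, hab⟩, ⟨le_refl a, hab⟩, Or.inl ⟨rfl, rfl⟩⟩⟩

end core

section cong

variable {a b : L}

/-- Componentwise relation on triples. -/
def Tcw (Θ : L → L → Prop) (p q : L × L × L) : Prop :=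
  Θ p.1 q.1 ∧ Θ p.2.1 q.2.1 ∧ Θ p.2.2 q.2.2

variable {Θ : L → L → Prop}

lemma Tsup (hΘ : IsLatticeCongruence Θ) {x x' y y' : L} (h1 : Θ x x') (h2 : Θ y y') :
    Θ (x ⊔ y) (x' ⊔ y') := (hΘ.2 _ _ _ _ h1 h2).1

lemma Tinf (hΘ : IsLatticeCongruence Θ) {x x' y y' : L} (h1 : Θ x x') (h2 : Θ y y') :
    Θ (x ⊓ y) (x' ⊓ y') := (hΘ.2 _ _ _ _ h1 h2).2

lemma Tcw_J (hΘ : IsLatticeCongruence Θ) {p q : L × L × L} (h : Tcw Θ p q) :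
    Tcw Θ (Jf p) (Jf q) := by
  obtain ⟨h1, h2, h3⟩ := h
  exact ⟨Tsup hΘ h1 (Tinf hΘ h2 h3),
    Tsup hΘ h2 (Tinf hΘ (Tsup hΘ h1 (Tinf hΘ h2 h3)) h3),
    Tsup hΘ h3 (Tinf hΘ (Tsup hΘ h1 (Tinf hΘ h2 h3)) h2)⟩

lemma Tcw_cw (hΘ : IsLatticeCongruence Θ) {u v u' v' : K a b}
    (h : Tcw Θ u.1 v.1) (h' : Tcw Θ u'.1 v'.1) : Tcw Θ (u.1 ⊔ u'.1) (v.1 ⊔ v'.1) :=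
  ⟨Tsup hΘ h.1 h'.1, Tsup hΘ h.2.1 h'.2.1, Tsup hΘ h.2.2 h'.2.2⟩

lemma sup_compat_aux (hab : a ≤ b) (hd : Hd a b) (hΘ : IsLatticeCongruence Θ)
    {u v u' v' : K a b}
    (hu : (u.1 ⊔ u'.1).2.1 = a ∧ (u.1 ⊔ u'.1).2.2 = a)
    (hv : ¬((v.1 ⊔ v'.1).2.1 = a ∧ (v.1 ⊔ v'.1).2.2 = a))
    (h : Tcw Θ u.1 v.1) (h' : Tcw Θ u'.1 v'.1) :
    Tcw Θ (u.1 ⊔ u'.1) (Jf (v.1 ⊔ v'.1)) := by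
  -- some of v, v' has a nonpure coordinate, hence its first coordinate is ≥ a
  have key : Θ ((u.1 ⊔ u'.1).1) ((u.1 ⊔ u'.1).1 ⊔ a) := by
    have hcase : a ≤ v.1.1 ∧ Θ u.1.1 v.1.1 ∨ a ≤ v'.1.1 ∧ Θ u'.1.1 v'.1.1 := by
      by_cases hvp : v.1.2.1 = a ∧ v.1.2.2 = a
      · by_cases hvp' : v'.1.2.1 = a ∧ v'.1.2.2 = a
        · exfalso
          exact hv ⟨by show v.1.2.1 ⊔ v'.1.2.1 = a; rw [hvp.1, hvp'.1, sup_idem],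
            by show v.1.2.2 ⊔ v'.1.2.2 = a; rw [hvp.2, hvp'.2, sup_idem]⟩
        · rcases v'.2.2.2 with hh | hh
          · exact absurd hh hvp'
          · exact Or.inr ⟨hh.1, h'.1⟩
      · rcases v.2.2.2 with hh | hh
        · exact absurd hh hvp
        · exact Or.inl ⟨hh.1, h.1⟩
    rcases hcase with ⟨hva, hxx⟩ | ⟨hva, hxx⟩
    · have k1 : Θ (u.1.1 ⊔ a) v.1.1 := by
        have := Tsup hΘ hxx (hΘ.1.refl a)
        rwa [sup_eq_left.2 hva] at this
      have k2 : Θ u.1.1 (u.1.1 ⊔ a) := hΘ.1.trans hxx (hΘ.1.symm k1)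
      have k3 := Tsup hΘ k2 (hΘ.1.refl u'.1.1)
      rwa [sup_right_comm] at k3
    · have k1 : Θ (u'.1.1 ⊔ a) v'.1.1 := by
        have := Tsup hΘ hxx (hΘ.1.refl a)
        rwa [sup_eq_left.2 hva] at this
      have k2 : Θ u'.1.1 (u'.1.1 ⊔ a) := hΘ.1.trans hxx (hΘ.1.symm k1)
      have k3 := Tsup hΘ (hΘ.1.refl u.1.1) k2
      rwa [← sup_assoc] at k3
  have t2 : Tcw Θ (Jf (u.1 ⊔ u'.1)) (Jf (v.1 ⊔ v'.1)) := Tcw_J hΘ (Tcw_cw hΘ h h')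
  have hJu : Jf (u.1 ⊔ u'.1) = ((u.1 ⊔ u'.1).1 ⊔ a, a, a) := by
    show ((u.1 ⊔ u'.1).1 ⊔ (u.1 ⊔ u'.1).2.1 ⊓ (u.1 ⊔ u'.1).2.2, _, _) = _
    rw [hu.1, hu.2, inf_idem]
    rw [sup_eq_left.2 (inf_le_right : (_ ⊔ a) ⊓ a ≤ a)]
  rw [hJu] at t2
  refine ⟨hΘ.1.trans key t2.1, ?_, ?_⟩
  · show Θ (u.1 ⊔ u'.1).2.1 (Jf (v.1 ⊔ v'.1)).2.1
    rw [hu.1]; exact t2.2.1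
  · show Θ (u.1 ⊔ u'.1).2.2 (Jf (v.1 ⊔ v'.1)).2.2
    rw [hu.2]; exact t2.2.2

lemma Tcw_symm (hΘ : IsLatticeCongruence Θ) {p q : L × L × L} (h : Tcw Θ p q) :
    Tcw Θ q p := ⟨hΘ.1.symm h.1, hΘ.1.symm h.2.1, hΘ.1.symm h.2.2⟩

lemma sup_compat (hab : a ≤ b) (hd : Hd a b) (hΘ : IsLatticeCongruence Θ)
    {u v u' v' : K a b} (h : Tcw Θ u.1 v.1) (h' : Tcw Θ u'.1 v'.1) :
    Tcw Θ (ksup hab hd u u').1 (ksup hab hd v v').1 := by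
  by_cases h1 : (u.1 ⊔ u'.1).2.1 = a ∧ (u.1 ⊔ u'.1).2.2 = a
  · by_cases h2 : (v.1 ⊔ v'.1).2.1 = a ∧ (v.1 ⊔ v'.1).2.2 = a
    · rw [ksup_val_pure hab hd h1, ksup_val_pure hab hd h2]
      exact Tcw_cw hΘ h h'
    · rw [ksup_val_pure hab hd h1, ksup_val_npure hab hd h2]
      exact sup_compat_aux hab hd hΘ h1 h2 h h'
  · by_cases h2 : (v.1 ⊔ v'.1).2.1 = a ∧ (v.1 ⊔ v'.1).2.2 = a
    · rw [ksup_val_npure hab hd h1, ksup_val_pure hab hd h2]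
      exact Tcw_symm hΘ
        (sup_compat_aux hab hd hΘ h2 h1 (Tcw_symm hΘ h) (Tcw_symm hΘ h'))
    · rw [ksup_val_npure hab hd h1, ksup_val_npure hab hd h2]
      exact Tcw_J hΘ (Tcw_cw hΘ h h')

lemma inf_compat (hΘ : IsLatticeCongruence Θ) {u v u' v' : K a b}
    (h : Tcw Θ u.1 v.1) (h' : Tcw Θ u'.1 v'.1) :
    Tcw Θ (kinf u u').1 (kinf v v').1 :=
  ⟨Tinf hΘ h.1 h'.1, Tinf hΘ h.2.1 h'.2.1, Tinf hΘ h.2.2 h'.2.2⟩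

end cong

section elts

variable {a b : L}

/-- The element `(a, y, a)`. -/
def qel (hab : a ≤ b) (y : L) (hy1 : a ≤ y) (hy2 : y ≤ b) : K a b :=
  ⟨(a, y, a), ⟨⟨hy1, hy2⟩, ⟨le_refl a, hab⟩,
    Or.inr ⟨le_refl a, by
      constructor
      · show a ⊓ y = y ⊓ a
        rw [inf_eq_left.2 hy1, inf_eq_right.2 hy1]
      · show a ⊓ a = y ⊓ a
        rw [inf_idem, inf_eq_right.2 hy1]⟩⟩⟩

/-- The element `(a, a, z)`. -/
def rel (hab : a ≤ b) (z : L) (hz1 : a ≤ z) (hz2 : z ≤ b) : K a b :=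
  ⟨(a, a, z), ⟨⟨le_refl a, hab⟩, ⟨hz1, hz2⟩,
    Or.inr ⟨le_refl a, by
      constructor
      · show a ⊓ a = a ⊓ z
        rw [inf_idem, inf_eq_left.2 hz1]
      · show a ⊓ z = a ⊓ z
        rfl⟩⟩⟩

/-- `(a, b, a)`. -/
def qtop (hab : a < b) : K a b := qel hab.le b hab.le le_rfl

/-- `(a, a, b)`. -/
def rtop (hab : a < b) : K a b := rel hab.le b hab.le le_rfl

variable (hab : a < b) (hd : Hd a b)

lemma extractY (u : K a b) :
    kinf (ksup hab.le hd (kinf u (qtop hab)) (rtop hab)) (femb hab.le b)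
      = femb hab.le u.1.2.1 := by
  have hy1 := u.2.1.1
  have hy2 := u.2.1.2
  have hz1 := u.2.2.1.1
  have hcw : (kinf u (qtop hab)).1 ⊔ (rtop hab).1 = (a, u.1.2.1, b) := by
    show ((u.1.1 ⊓ a) ⊔ a, (u.1.2.1 ⊓ b) ⊔ a, (u.1.2.2 ⊓ a) ⊔ b) = _
    rw [sup_eq_right.2 (inf_le_right : u.1.1 ⊓ a ≤ a), inf_eq_left.2 hy2,
      sup_eq_left.2 hy1, inf_eq_right.2 hz1, sup_eq_right.2 hab.le]
  have hval : (ksup hab.le hd (kinf u (qtop hab)) (rtop hab)).1 = (u.1.2.1, u.1.2.1, b) := by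
    rw [ksup_val_eq_npure hab.le hd hcw (fun hh => hab.ne' hh.2)]
    show (a ⊔ u.1.2.1 ⊓ b, u.1.2.1 ⊔ (a ⊔ u.1.2.1 ⊓ b) ⊓ b, b ⊔ (a ⊔ u.1.2.1 ⊓ b) ⊓ u.1.2.1) = _
    rw [inf_eq_left.2 hy2, sup_eq_right.2 hy1, inf_eq_left.2 hy2, sup_idem, inf_idem,
      sup_eq_left.2 hy2]
  apply Subtype.ext
  show (ksup hab.le hd (kinf u (qtop hab)) (rtop hab)).1 ⊓ (b, a, a) = (u.1.2.1, a, a)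
  rw [hval]
  show (u.1.2.1 ⊓ b, u.1.2.1 ⊓ a, b ⊓ a) = _
  rw [inf_eq_left.2 hy2, inf_eq_right.2 hy1, inf_eq_right.2 hab.le]

lemma extractZ (u : K a b) :
    kinf (ksup hab.le hd (kinf u (rtop hab)) (qtop hab)) (femb hab.le b)
      = femb hab.le u.1.2.2 := by
  have hy1 := u.2.1.1
  have hz1 := u.2.2.1.1
  have hz2 := u.2.2.1.2
  have hcw : (kinf u (rtop hab)).1 ⊔ (qtop hab).1 = (a, b, u.1.2.2) := by
    show ((u.1.1 ⊓ a) ⊔ a, (u.1.2.1 ⊓ a) ⊔ b, (u.1.2.2 ⊓ b) ⊔ a) = _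
    rw [sup_eq_right.2 (inf_le_right : u.1.1 ⊓ a ≤ a), inf_eq_right.2 hy1,
      sup_eq_right.2 hab.le, inf_eq_left.2 hz2, sup_eq_left.2 hz1]
  have hval : (ksup hab.le hd (kinf u (rtop hab)) (qtop hab)).1 = (u.1.2.2, b, u.1.2.2) := by
    rw [ksup_val_eq_npure hab.le hd hcw (fun hh => hab.ne' hh.1)]
    show (a ⊔ b ⊓ u.1.2.2, b ⊔ (a ⊔ b ⊓ u.1.2.2) ⊓ u.1.2.2, u.1.2.2 ⊔ (a ⊔ b ⊓ u.1.2.2) ⊓ b) = _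
    rw [inf_eq_right.2 hz2, sup_eq_right.2 hz1, inf_idem, sup_eq_left.2 hz2,
      inf_eq_left.2 hz2, sup_idem]
  apply Subtype.ext
  show (ksup hab.le hd (kinf u (rtop hab)) (qtop hab)).1 ⊓ (b, a, a) = (u.1.2.2, a, a)
  rw [hval]
  show (u.1.2.2 ⊓ b, b ⊓ a, u.1.2.2 ⊓ a) = _
  rw [inf_eq_left.2 hz2, inf_eq_right.2 hab.le, inf_eq_right.2 hz1]

lemma qel_eq (y : L) (hy1 : a ≤ y) (hy2 : y ≤ b) :
    kinf (qtop hab) (ksup hab.le hd (femb hab.le y) (rtop hab)) = qel hab.le y hy1 hy2 := by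
  have hcw : (femb hab.le y).1 ⊔ (rtop hab).1 = (y, a, b) := by
    show (y ⊔ a, a ⊔ a, a ⊔ b) = _
    rw [sup_eq_left.2 hy1, sup_idem, sup_eq_right.2 hab.le]
  have hval : (ksup hab.le hd (femb hab.le y) (rtop hab)).1 = (y, y, b) := by
    rw [ksup_val_eq_npure hab.le hd hcw (fun hh => hab.ne' hh.2)]
    show (y ⊔ a ⊓ b, a ⊔ (y ⊔ a ⊓ b) ⊓ b, b ⊔ (y ⊔ a ⊓ b) ⊓ a) = _
    rw [inf_eq_left.2 hab.le, sup_eq_left.2 hy1, inf_eq_left.2 hy2, sup_eq_right.2 hy1,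
      inf_eq_right.2 hy1, sup_eq_left.2 hab.le]
  apply Subtype.ext
  show (a, b, a) ⊓ (ksup hab.le hd (femb hab.le y) (rtop hab)).1 = (a, y, a)
  rw [hval]
  show (a ⊓ y, b ⊓ y, a ⊓ b) = _
  rw [inf_eq_left.2 hy1, inf_eq_right.2 hy2, inf_eq_left.2 hab.le]

lemma rel_eq (z : L) (hz1 : a ≤ z) (hz2 : z ≤ b) :
    kinf (rtop hab) (ksup hab.le hd (femb hab.le z) (qtop hab)) = rel hab.le z hz1 hz2 := by
  have hcw : (femb hab.le z).1 ⊔ (qtop hab).1 = (z, b, a) := by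
    show (z ⊔ a, a ⊔ b, a ⊔ a) = _
    rw [sup_eq_left.2 hz1, sup_eq_right.2 hab.le, sup_idem]
  have hval : (ksup hab.le hd (femb hab.le z) (qtop hab)).1 = (z, b, z) := by
    rw [ksup_val_eq_npure hab.le hd hcw (fun hh => hab.ne' hh.1)]
    show (z ⊔ b ⊓ a, b ⊔ (z ⊔ b ⊓ a) ⊓ a, a ⊔ (z ⊔ b ⊓ a) ⊓ b) = _
    rw [inf_eq_right.2 hab.le, sup_eq_left.2 hz1, inf_eq_right.2 hz1,
      sup_eq_left.2 hab.le, inf_eq_left.2 hz2, sup_eq_right.2 hz1]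
  apply Subtype.ext
  show (a, a, b) ⊓ (ksup hab.le hd (femb hab.le z) (qtop hab)).1 = (a, a, z)
  rw [hval]
  show (a ⊓ z, a ⊓ b, b ⊓ z) = _
  rw [inf_eq_left.2 hz1, inf_eq_left.2 hab.le, inf_eq_right.2 hz2]

lemma decomp (u : K a b) (hx : a ≤ u.1.1) (hbal : Bal u.1) :
    ksup hab.le hd (ksup hab.le hd (femb hab.le u.1.1)
        (qel hab.le u.1.2.1 u.2.1.1 u.2.1.2))
      (rel hab.le u.1.2.2 u.2.2.1.1 u.2.2.1.2) = u := by
  have hy1 := u.2.1.1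
  have hy2 := u.2.1.2
  have hz1 := u.2.2.1.1
  have hz2 := u.2.2.1.2
  have hb1 : u.1.1 ⊓ u.1.2.1 = u.1.2.1 ⊓ u.1.2.2 := hbal.1
  have hb2 : u.1.1 ⊓ u.1.2.2 = u.1.2.1 ⊓ u.1.2.2 := hbal.2
  have hcw1 : (femb hab.le u.1.1).1 ⊔ (qel hab.le u.1.2.1 hy1 hy2).1
      = (u.1.1, u.1.2.1, a) := by
    show (u.1.1 ⊔ a, a ⊔ u.1.2.1, a ⊔ a) = _
    rw [sup_eq_left.2 hx, sup_eq_right.2 hy1, sup_idem]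
  have hs1 : (ksup hab.le hd (femb hab.le u.1.1) (qel hab.le u.1.2.1 hy1 hy2)).1
      = (u.1.1, u.1.2.1, u.1.1 ⊓ u.1.2.1) := by
    by_cases hya : u.1.2.1 = a
    · rw [ksup_val_eq_pure hab.le hd hcw1 ⟨hya, rfl⟩]
      rw [hya, inf_eq_right.2 hx]
    · rw [ksup_val_eq_npure hab.le hd hcw1 (fun hh => hya hh.1)]
      show (u.1.1 ⊔ u.1.2.1 ⊓ a,
        u.1.2.1 ⊔ (u.1.1 ⊔ u.1.2.1 ⊓ a) ⊓ a,
        a ⊔ (u.1.1 ⊔ u.1.2.1 ⊓ a) ⊓ u.1.2.1) = _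
      rw [inf_eq_right.2 hy1, sup_eq_left.2 hx, inf_eq_right.2 hx,
        sup_eq_left.2 hy1, sup_eq_right.2 (le_inf hx hy1)]
  apply Subtype.ext
  have hcw2 : (ksup hab.le hd (femb hab.le u.1.1) (qel hab.le u.1.2.1 hy1 hy2)).1
      ⊔ (rel hab.le u.1.2.2 hz1 hz2).1 = (u.1.1, u.1.2.1, u.1.2.2) := by
    rw [hs1]
    show (u.1.1 ⊔ a, u.1.2.1 ⊔ a, u.1.1 ⊓ u.1.2.1 ⊔ u.1.2.2) = _
    rw [sup_eq_left.2 hx, sup_eq_left.2 hy1, hb1,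
      sup_eq_right.2 (inf_le_right : u.1.2.1 ⊓ u.1.2.2 ≤ u.1.2.2)]
  by_cases hp : u.1.2.1 = a ∧ u.1.2.2 = a
  · rw [ksup_val_eq_pure hab.le hd hcw2 hp]
  · rw [ksup_val_eq_npure hab.le hd hcw2 hp]
    show (u.1.1 ⊔ u.1.2.1 ⊓ u.1.2.2,
      u.1.2.1 ⊔ (u.1.1 ⊔ u.1.2.1 ⊓ u.1.2.2) ⊓ u.1.2.2,
      u.1.2.2 ⊔ (u.1.1 ⊔ u.1.2.1 ⊓ u.1.2.2) ⊓ u.1.2.1) = _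
    rw [← hb1, sup_inf_self, hb2, sup_inf_self, hb1,
      sup_eq_left.2 (inf_le_right : u.1.2.1 ⊓ u.1.2.2 ≤ u.1.2.2)]

end elts

section unique

variable {a b : L} {Θ : L → L → Prop}

lemma fwd (hab : a < b) (hd : Hd a b) (hΘ : IsLatticeCongruence Θ)
    (Φ : K a b → K a b → Prop)
    (hrefl : ∀ u, Φ u u)
    (hcc : ∀ u v u' v', Φ u v → Φ u' v' →
      Φ (ksup hab.le hd u u') (ksup hab.le hd v v') ∧ Φ (kinf u u') (kinf v v'))
    (hr : ∀ x y, Φ (femb hab.le x) (femb hab.le y) ↔ Θ x y)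
    {u v : K a b} (h : Φ u v) : Tcw Θ u.1 v.1 := by
  refine ⟨?_, ?_, ?_⟩
  · have e1 : kinf u (femb hab.le (u.1.1 ⊔ v.1.1)) = femb hab.le u.1.1 := by
      apply Subtype.ext
      show (u.1.1 ⊓ (u.1.1 ⊔ v.1.1), u.1.2.1 ⊓ a, u.1.2.2 ⊓ a) = (u.1.1, a, a)
      rw [inf_eq_left.2 le_sup_left, inf_eq_right.2 u.2.1.1, inf_eq_right.2 u.2.2.1.1]
    have e2 : kinf v (femb hab.le (u.1.1 ⊔ v.1.1)) = femb hab.le v.1.1 := by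
      apply Subtype.ext
      show (v.1.1 ⊓ (u.1.1 ⊔ v.1.1), v.1.2.1 ⊓ a, v.1.2.2 ⊓ a) = (v.1.1, a, a)
      rw [inf_eq_left.2 le_sup_right, inf_eq_right.2 v.2.1.1, inf_eq_right.2 v.2.2.1.1]
    have h2 := (hcc u v _ _ h (hrefl (femb hab.le (u.1.1 ⊔ v.1.1)))).2
    rw [e1, e2] at h2
    exact (hr _ _).1 h2
  · have h1 := (hcc u v _ _ h (hrefl (qtop hab))).2
    have h2 := (hcc _ _ _ _ h1 (hrefl (rtop hab))).1
    have h3 := (hcc _ _ _ _ h2 (hrefl (femb hab.le b))).2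
    rw [extractY hab hd u, extractY hab hd v] at h3
    exact (hr _ _).1 h3
  · have h1 := (hcc u v _ _ h (hrefl (rtop hab))).2
    have h2 := (hcc _ _ _ _ h1 (hrefl (qtop hab))).1
    have h3 := (hcc _ _ _ _ h2 (hrefl (femb hab.le b))).2
    rw [extractZ hab hd u, extractZ hab hd v] at h3
    exact (hr _ _).1 h3

lemma bwd (hab : a < b) (hd : Hd a b) (hΘ : IsLatticeCongruence Θ)
    (Φ : K a b → K a b → Prop)
    (hequiv : Equivalence Φ)
    (hcc : ∀ u v u' v', Φ u v → Φ u' v' →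
      Φ (ksup hab.le hd u u') (ksup hab.le hd v v') ∧ Φ (kinf u u') (kinf v v'))
    (hr : ∀ x y, Φ (femb hab.le x) (femb hab.le y) ↔ Θ x y)
    {u v : K a b} (h : Tcw Θ u.1 v.1) : Φ u v := by
  have main : ∀ u v : K a b, a ≤ u.1.1 → Bal u.1 → a ≤ v.1.1 → Bal v.1 →
      Tcw Θ u.1 v.1 → Φ u v := by
    intro u v hux hub hvx hvb h
    have hq : Φ (qel hab.le u.1.2.1 u.2.1.1 u.2.1.2)
        (qel hab.le v.1.2.1 v.2.1.1 v.2.1.2) := by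
      have k1 := (hr u.1.2.1 v.1.2.1).2 h.2.1
      have k2 := (hcc _ _ _ _ k1 (hequiv.refl (rtop hab))).1
      have k3 := (hcc _ _ _ _ (hequiv.refl (qtop hab)) k2).2
      rwa [qel_eq hab hd _ u.2.1.1 u.2.1.2, qel_eq hab hd _ v.2.1.1 v.2.1.2] at k3
    have hrz : Φ (rel hab.le u.1.2.2 u.2.2.1.1 u.2.2.1.2)
        (rel hab.le v.1.2.2 v.2.2.1.1 v.2.2.1.2) := by
      have k1 := (hr u.1.2.2 v.1.2.2).2 h.2.2
      have k2 := (hcc _ _ _ _ k1 (hequiv.refl (qtop hab))).1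
      have k3 := (hcc _ _ _ _ (hequiv.refl (rtop hab)) k2).2
      rwa [rel_eq hab hd _ u.2.2.1.1 u.2.2.1.2, rel_eq hab hd _ v.2.2.1.1 v.2.2.1.2] at k3
    have hx := (hr u.1.1 v.1.1).2 h.1
    have s1 := (hcc _ _ _ _ hx hq).1
    have s2 := (hcc _ _ _ _ s1 hrz).1
    rwa [decomp hab hd u hux hub, decomp hab hd v hvx hvb] at s2
  have sorts : ∀ w : K a b, (a ≤ w.1.1 ∧ Bal w.1) ∨ (w.1.2.1 = a ∧ w.1.2.2 = a) := by
    intro w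
    rcases w.2.2.2 with hp | hn
    · exact Or.inr hp
    · exact Or.inl ⟨hn.1, hn.2⟩
  have mixed : ∀ u v : K a b, u.1.2.1 = a → u.1.2.2 = a → a ≤ v.1.1 → Bal v.1 →
      Tcw Θ u.1 v.1 → Φ u v := by
    intro u v hy hz hvx hvb h
    have k1 : Θ (u.1.1 ⊔ a) v.1.1 := by
      have := Tsup hΘ h.1 (hΘ.1.refl a)
      rwa [sup_eq_left.2 hvx] at this
    have k2 : Θ u.1.1 (u.1.1 ⊔ a) := hΘ.1.trans h.1 (hΘ.1.symm k1)
    have eu : u = femb hab.le u.1.1 := by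
      apply Subtype.ext
      rw [Prod.ext_iff, Prod.ext_iff]
      exact ⟨rfl, hy, hz⟩
    have e1 : Φ u (femb hab.le (u.1.1 ⊔ a)) := by
      rw [eu]; exact (hr _ _).2 k2
    have e2 : Φ (femb hab.le (u.1.1 ⊔ a)) v := by
      apply main _ _ le_sup_right _ hvx hvb
      · refine ⟨k1, ?_, ?_⟩
        · show Θ a v.1.2.1
          have hh := h.2.1; rw [hy] at hh; exact hh
        · show Θ a v.1.2.2
          have hh := h.2.2; rw [hz] at hh; exact hh
      · constructor
        · show (u.1.1 ⊔ a) ⊓ a = a ⊓ a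
          rw [inf_eq_right.2 (le_sup_right : a ≤ u.1.1 ⊔ a), inf_idem]
        · show (u.1.1 ⊔ a) ⊓ a = a ⊓ a
          rw [inf_eq_right.2 (le_sup_right : a ≤ u.1.1 ⊔ a), inf_idem]
    exact hequiv.trans e1 e2
  rcases sorts u with hu | hu
  · rcases sorts v with hv | hv
    · exact main u v hu.1 hu.2 hv.1 hv.2 h
    · exact hequiv.symm (mixed v u hv.1 hv.2 hu.1 hu.2 (Tcw_symm hΘ h))
  · rcases sorts v with hv | hv
    · exact mixed u v hu.1 hu.2 hv.1 hv.2 h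
    · have eu : u = femb hab.le u.1.1 := by
        apply Subtype.ext
        rw [Prod.ext_iff, Prod.ext_iff]
        exact ⟨rfl, hu.1, hu.2⟩
      have ev : v = femb hab.le v.1.1 := by
        apply Subtype.ext
        rw [Prod.ext_iff, Prod.ext_iff]
        exact ⟨rfl, hv.1, hv.2⟩
      rw [eu, ev]
      exact (hr _ _).2 h.1

end unique

end CPE

/-- If a lattice `L` has an interval `[a, b]` with `a < b` that is a distributive
lattice, then `L` has a proper congruence-preserving extension. -/
theorem proper_congruence_preserving_extension_of_distributive_interval
    (L : Type u) [Lattice L]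
    (h : ∃ a b : L, a < b ∧
      ∀ x ∈ Set.Icc a b, ∀ y ∈ Set.Icc a b, ∀ z ∈ Set.Icc a b,
        x ⊓ (y ⊔ z) = (x ⊓ y) ⊔ (x ⊓ z)) :
    ∃ (K : Type u) (_ : Lattice K) (f : L → K),
      Function.Injective f ∧
      (∀ x y : L, f (x ⊔ y) = f x ⊔ f y) ∧
      (∀ x y : L, f (x ⊓ y) = f x ⊓ f y) ∧
      ¬ Function.Surjective f ∧
      ∀ Θ : L → L → Prop, IsLatticeCongruence Θ →
        ∃! Φ : K → K → Prop,
          IsLatticeCongruence Φ ∧ ∀ x y : L, Φ (f x) (f y) ↔ Θ x y := by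
  obtain ⟨a, b, hab, hD⟩ := h
  have hd : CPE.Hd a b := fun x hx1 hx2 y hy1 hy2 z hz1 hz2 =>
    hD x ⟨hx1, hx2⟩ y ⟨hy1, hy2⟩ z ⟨hz1, hz2⟩
  refine ⟨CPE.K a b, CPE.latK hab.le hd, CPE.femb hab.le, ?_, ?_, ?_, ?_, ?_⟩
  · intro x y hxy
    exact congrArg (fun u : CPE.K a b => u.1.1) hxy
  · intro x y
    show CPE.femb hab.le (x ⊔ y) = CPE.ksup hab.le hd (CPE.femb hab.le x) (CPE.femb hab.le y)
    apply Subtype.ext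
    have : (CPE.ksup hab.le hd (CPE.femb hab.le x) (CPE.femb hab.le y)).1
        = ((x ⊔ y : L), a, a) := by
      apply CPE.ksup_val_eq_pure hab.le hd _ ⟨rfl, rfl⟩
      show ((x ⊔ y : L), a ⊔ a, a ⊔ a) = ((x ⊔ y : L), a, a)
      rw [sup_idem]
    rw [this]
    rfl
  · intro x y
    show CPE.femb hab.le (x ⊓ y) = CPE.kinf (CPE.femb hab.le x) (CPE.femb hab.le y)
    apply Subtype.ext
    show ((x ⊓ y : L), a, a) = ((x ⊓ y : L), a ⊓ a, a ⊓ a)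
    rw [inf_idem]
  · intro hs
    obtain ⟨l, hl⟩ := hs (CPE.qtop hab)
    exact hab.ne (congrArg (fun u : CPE.K a b => u.1.2.1) hl)
  · intro Θ hΘ
    refine ⟨fun u v => CPE.Tcw Θ u.1 v.1,
      ⟨⟨⟨fun u => ⟨hΘ.1.refl _, hΘ.1.refl _, hΘ.1.refl _⟩,
        fun h => CPE.Tcw_symm hΘ h,
        fun h1 h2 => ⟨hΘ.1.trans h1.1 h2.1, hΘ.1.trans h1.2.1 h2.2.1,
          hΘ.1.trans h1.2.2 h2.2.2⟩⟩,
        fun u v u' v' h h' =>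
          ⟨CPE.sup_compat hab.le hd hΘ h h', CPE.inf_compat hΘ h h'⟩⟩,
      fun x y => ⟨fun hh => hh.1, fun hh => ⟨hh, hΘ.1.refl a, hΘ.1.refl a⟩⟩⟩, ?_⟩
    rintro Φ' ⟨hc, hr⟩
    funext u v
    apply propext
    constructor
    · intro hh
      exact CPE.fwd hab hd hΘ Φ' (fun w => hc.1.refl w)
        (fun u v u' v' h h' => hc.2 u v u' v' h h') hr hh
    · intro hh
      exact CPE.bwd hab hd hΘ Φ' hc.1
        (fun u v u' v' h h' => hc.2 u v u' v' h h') hr hh
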